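/- arXiv:math/0402294 — 2 statements merged into one kernel-verified Lean document; each statement's English description precedes it below -/
import Mathlib

section
/- For any orthonormal vectors v₁, …, v_{2n+1} ∈ m one has |Φ(v₁,…,v_{2n+1})| ≤ (2n)!, and equality is attained: Φ(F₁₂, F₁₃, F₁₄, …, F₁,₂ₙ₊₂) = (2n)!. (This is the comass computation for the calibration Φ = Te(ω) ∧ e(Ω*) on the flag manifold F_o(1,2,ℝ^{2n+2}) = T₁(S^{2n+1}): the maximum is achieved only on (2n+1)-planes having one vertical direction.) -/
open Matrix

/- STATEMENT 13: On the tangent space `m` of the flag manifold F_o(1,2,ℝ^{2n+2}) inside the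
skew-symmetric (2n+2)×(2n+2) matrices, the calibration `Φ = μ₁₂ ∧ E*` (where
`E* = ∑_σ sgn σ Ω*_{σ(3)σ(4)} ∧ ⋯ ∧ Ω*_{σ(2n+1)σ(2n+2)}`, wedge products in the shuffle
convention, so that the wedge of the 1-form `μ₁₂` with the `n` alternating 2-forms is
`(1/2ⁿ) ∑_{τ ∈ S_{2n+1}} sgn τ (…)`) satisfies `|Φ(v₁,…,v_{2n+1})| ≤ (2n)!` for any
orthonormal `v₁,…,v_{2n+1} ∈ m`, with equality `Φ(F₁₂, F₁₃,…,F₁,₂ₙ₊₂) = (2n)!`. -/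

/-- column embedding `{3,…,2n+2}` (0-indexed: `k ↦ k + 2`). -/
def col (n : ℕ) (k : Fin (2 * n)) : Fin (2 * n + 2) := ⟨k.1 + 2, by have := k.isLt; omega⟩

/-- `Ω* k l (X, Y) = ∑_{i=1}^{2} (X_{ik} Y_{il} − X_{il} Y_{ik})`, columns in `{3,…,2n+2}`. -/
noncomputable def Omst (n : ℕ) (k l : Fin (2 * n))
    (X Y : Matrix (Fin (2 * n + 2)) (Fin (2 * n + 2)) ℝ) : ℝ :=
  ∑ i : Fin 2, (X (i.castLE (by omega)) (col n k) * Y (i.castLE (by omega)) (col n l)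
    - X (i.castLE (by omega)) (col n l) * Y (i.castLE (by omega)) (col n k))

/-- `Φ = μ₁₂ ∧ E*`, an alternating (2n+1)-form, via the shuffle convention. -/
noncomputable def Phi (n : ℕ) (v : Fin (2 * n + 1) → Matrix (Fin (2 * n + 2)) (Fin (2 * n + 2)) ℝ) :
    ℝ :=
  ∑ σ : Equiv.Perm (Fin (2 * n)), ((Equiv.Perm.sign σ : ℤ) : ℝ) *
    ((1 / 2 ^ n : ℝ) * ∑ τ : Equiv.Perm (Fin (2 * n + 1)), ((Equiv.Perm.sign τ : ℤ) : ℝ) *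
      ((v (τ ⟨0, by omega⟩) ⟨0, by omega⟩ ⟨1, by omega⟩) *
        ∏ j : Fin n,
          Omst n (σ ⟨2 * j.1, by have := j.isLt; omega⟩) (σ ⟨2 * j.1 + 1, by have := j.isLt; omega⟩)
            (v (τ ⟨2 * j.1 + 1, by have := j.isLt; omega⟩))
            (v (τ ⟨2 * j.1 + 2, by have := j.isLt; omega⟩))))

/-- Elementary skew-symmetric matrix `F i j` (for `i < j`). -/
noncomputable def Fskew (n : ℕ) (i j : Fin (2 * n + 2)) :
    Matrix (Fin (2 * n + 2)) (Fin (2 * n + 2)) ℝ :=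
  Matrix.of fun a b => if a = i ∧ b = j then 1 else if a = j ∧ b = i then -1 else 0

namespace Stmt13

open Complex Equiv Equiv.Perm Finset
open scoped ComplexOrder

/-! ### Pairing `Fin n × Fin 2 ≃ Fin (2n)` -/

/-- The pairing equivalence `(j, i) ↦ 2j + i`. -/
def pe (n : ℕ) : Fin n × Fin 2 ≃ Fin (2 * n) where
  toFun x := ⟨2 * x.1.1 + x.2.1, by have := x.1.isLt; have := x.2.isLt; omega⟩
  invFun m := (⟨m.1 / 2, by have := m.isLt; omega⟩, ⟨m.1 % 2, by omega⟩)
  left_inv x := by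
    obtain ⟨⟨j, hj⟩, ⟨i, hi⟩⟩ := x
    simp only [Prod.mk.injEq, Fin.mk.injEq]
    omega
  right_inv m := by
    apply Fin.ext
    simp only [Fin.val_mk]
    omega

lemma prod_pairs (n : ℕ) {M : Type*} [CommMonoid M] (G : Fin (2 * n) → M) :
    ∏ m, G m = ∏ j : Fin n, (G ⟨2 * j.1, by have := j.isLt; omega⟩ *
      G ⟨2 * j.1 + 1, by have := j.isLt; omega⟩) := by
  rw [← Equiv.prod_comp (pe n) G, Fintype.prod_prod_type]
  refine Finset.prod_congr rfl fun j _ => ?_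
  rw [Fin.prod_univ_two]
  rfl

/-! ### The pair-swapping permutations and their signs -/

/-- For `χ : Fin n → Bool`, the permutation of `Fin (2n)` swapping `2j ↔ 2j+1` iff `χ j`. -/
def flips (n : ℕ) (χ : Fin n → Bool) : Equiv.Perm (Fin (2 * n)) :=
  (pe n).permCongr
    (Equiv.prodCongrRight fun j => if χ j then Equiv.swap (0 : Fin 2) 1 else Equiv.refl (Fin 2))

lemma sign_flips (n : ℕ) (χ : Fin n → Bool) :
    Equiv.Perm.sign (flips n χ) = ∏ j : Fin n, (if χ j then (-1 : ℤˣ) else 1) := by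
  rw [flips, Equiv.Perm.sign_permCongr, Equiv.Perm.sign_prodCongrRight]
  refine Finset.prod_congr rfl fun j _ => ?_
  split
  · exact Equiv.Perm.sign_swap (by decide)
  · exact Equiv.Perm.sign_refl

lemma pe_symm_L (n : ℕ) (j : Fin n) (h : 2 * j.1 < 2 * n) :
    (pe n).symm ⟨2 * j.1, h⟩ = (j, 0) := by
  simp only [pe, Equiv.coe_fn_symm_mk, Prod.mk.injEq, Fin.ext_iff, Fin.val_zero]
  omega

lemma pe_symm_R (n : ℕ) (j : Fin n) (h : 2 * j.1 + 1 < 2 * n) :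
    (pe n).symm ⟨2 * j.1 + 1, h⟩ = (j, 1) := by
  simp only [pe, Equiv.coe_fn_symm_mk, Prod.mk.injEq, Fin.ext_iff, Fin.val_one]
  omega

lemma flips_L (n : ℕ) (χ : Fin n → Bool) (j : Fin n) (h1 : 2 * j.1 < 2 * n)
    (h2 : 2 * j.1 + 1 < 2 * n) :
    flips n χ ⟨2 * j.1, h1⟩ = if χ j then ⟨2 * j.1 + 1, h2⟩ else ⟨2 * j.1, h1⟩ := by
  rw [flips, Equiv.permCongr_apply, pe_symm_L n j h1]
  rcases hc : χ j with _ | _ <;>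
    simp [hc, pe, Equiv.prodCongrRight, Fin.ext_iff, Equiv.swap_apply_left]

lemma flips_R (n : ℕ) (χ : Fin n → Bool) (j : Fin n) (h1 : 2 * j.1 < 2 * n)
    (h2 : 2 * j.1 + 1 < 2 * n) :
    flips n χ ⟨2 * j.1 + 1, h2⟩ = if χ j then ⟨2 * j.1, h1⟩ else ⟨2 * j.1 + 1, h2⟩ := by
  rw [flips, Equiv.permCongr_apply, pe_symm_R n j h2]
  rcases hc : χ j with _ | _ <;>
    simp [hc, pe, Equiv.prodCongrRight, Fin.ext_iff, Equiv.swap_apply_right]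

/-! ### The shift embedding `Perm (Fin 2n) → Perm (Fin (2n+1))` fixing `0` -/

/-- Shift a permutation of `Fin (2n)` to one of `Fin (2n+1)` fixing `0`. -/
def shp (n : ℕ) (g : Equiv.Perm (Fin (2 * n))) : Equiv.Perm (Fin (2 * n + 1)) :=
  Equiv.Perm.decomposeFin.symm (0, g)

lemma shp_zero (n : ℕ) (g : Equiv.Perm (Fin (2 * n))) (h : 0 < 2 * n + 1) :
    shp n g ⟨0, h⟩ = ⟨0, h⟩ := by
  have h0 : (⟨0, h⟩ : Fin (2 * n + 1)) = 0 := rfl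
  rw [h0, shp, Equiv.Perm.decomposeFin_symm_apply_zero]

lemma shp_succ (n : ℕ) (g : Equiv.Perm (Fin (2 * n))) (m : Fin (2 * n)) :
    shp n g m.succ = (g m).succ := by
  rw [shp, Equiv.Perm.decomposeFin_symm_apply_succ]
  simp

lemma sign_shp (n : ℕ) (g : Equiv.Perm (Fin (2 * n))) :
    Equiv.Perm.sign (shp n g) = Equiv.Perm.sign g := by
  simp [shp]


/-! ### The complex matrices -/

section Main

variable (n : ℕ) (v : Fin (2 * n + 1) → Matrix (Fin (2 * n + 2)) (Fin (2 * n + 2)) ℝ)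

/-- `t`-coordinate of a tangent vector. -/
def tv (a : Fin (2 * n + 1)) : ℝ := v a ⟨0, by omega⟩ ⟨1, by omega⟩

/-- complex coordinates of a tangent vector. -/
def zv (a : Fin (2 * n + 1)) (k : Fin (2 * n)) : ℂ :=
  ⟨v a ⟨0, by omega⟩ (col n k), v a ⟨1, by omega⟩ (col n k)⟩

/-- The complex `(2n+1) × (2n+1)` matrix attached to `σ`. -/
noncomputable def Dm (σ : Equiv.Perm (Fin (2 * n))) :
    Matrix (Fin (2 * n + 1)) (Fin (2 * n + 1)) ℂ :=
  Matrix.of fun a i =>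
    Fin.cases ((tv n v a : ℂ))
      (fun m => if m.1 % 2 = 0 then zv n v a (σ m) else (starRingEnd ℂ) (zv n v a (σ m))) i

/-- The plain product term. -/
noncomputable def pl (σ : Equiv.Perm (Fin (2 * n))) (τ : Equiv.Perm (Fin (2 * n + 1)))
    (j : Fin n) : ℂ :=
  zv n v (τ ⟨2 * j.1 + 1, by have := j.isLt; omega⟩) (σ ⟨2 * j.1, by have := j.isLt; omega⟩) *
    (starRingEnd ℂ)
      (zv n v (τ ⟨2 * j.1 + 2, by have := j.isLt; omega⟩) (σ ⟨2 * j.1 + 1, by have := j.isLt; omega⟩))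

lemma det_Dm (σ : Equiv.Perm (Fin (2 * n))) :
    (Dm n v σ).det = ∑ τ : Equiv.Perm (Fin (2 * n + 1)), ((Equiv.Perm.sign τ : ℤ) : ℂ) *
      ((tv n v (τ ⟨0, by omega⟩) : ℂ) * ∏ j : Fin n, pl n v σ τ j) := by
  rw [Matrix.det_apply]
  refine Finset.sum_congr rfl fun τ _ => ?_
  rw [Units.smul_def, zsmul_eq_mul]
  congr 1
  rw [Fin.prod_univ_succ, prod_pairs n (fun m => Dm n v σ (τ m.succ) m.succ)]
  congr 1
  refine Finset.prod_congr rfl fun j _ => ?_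
  have hL : ((⟨2 * j.1, by have := j.isLt; omega⟩ : Fin (2 * n)).succ : Fin (2 * n + 1))
      = ⟨2 * j.1 + 1, by have := j.isLt; omega⟩ := rfl
  have hR : ((⟨2 * j.1 + 1, by have := j.isLt; omega⟩ : Fin (2 * n)).succ : Fin (2 * n + 1))
      = ⟨2 * j.1 + 2, by have := j.isLt; omega⟩ := rfl
  rw [pl]
  congr 1
  · rw [← hL, Dm]
    simp only [Matrix.of_apply, Fin.cases_succ, Fin.val_mk]
    rw [if_pos (by omega)]
  · rw [← hR, Dm]
    simp only [Matrix.of_apply, Fin.cases_succ, Fin.val_mk]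
    rw [if_neg (by omega)]


lemma omst_re (k l : Fin (2 * n)) (a b : Fin (2 * n + 1)) :
    Omst n k l (v a) (v b) =
      (zv n v a k * (starRingEnd ℂ) (zv n v b l)
        - zv n v a l * (starRingEnd ℂ) (zv n v b k)).re := by
  rw [Omst, Fin.sum_univ_two]
  simp only [zv, Complex.sub_re, Complex.mul_re, Complex.conj_re, Complex.conj_im]
  have c0 : ((0 : Fin 2).castLE (by omega : (2:ℕ) ≤ 2 * n + 2)) = (⟨0, by omega⟩ : Fin (2*n+2)) := rfl
  have c1 : ((1 : Fin 2).castLE (by omega : (2:ℕ) ≤ 2 * n + 2)) = (⟨1, by omega⟩ : Fin (2*n+2)) := rfl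
  rw [c0, c1]
  ring

/-- The complexified 2-form evaluated along the pairs. -/
noncomputable def qq (σ : Equiv.Perm (Fin (2 * n))) (τ : Equiv.Perm (Fin (2 * n + 1)))
    (j : Fin n) : ℂ :=
  zv n v (τ ⟨2 * j.1 + 1, by have := j.isLt; omega⟩) (σ ⟨2 * j.1, by have := j.isLt; omega⟩) *
      (starRingEnd ℂ) (zv n v (τ ⟨2 * j.1 + 2, by have := j.isLt; omega⟩)
        (σ ⟨2 * j.1 + 1, by have := j.isLt; omega⟩))
    - zv n v (τ ⟨2 * j.1 + 1, by have := j.isLt; omega⟩) (σ ⟨2 * j.1 + 1, by have := j.isLt; omega⟩) *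
      (starRingEnd ℂ) (zv n v (τ ⟨2 * j.1 + 2, by have := j.isLt; omega⟩)
        (σ ⟨2 * j.1, by have := j.isLt; omega⟩))

/-- The four summands of `qq + conj qq`. -/
noncomputable def Ee (c : Bool × Bool) (σ : Equiv.Perm (Fin (2 * n)))
    (τ : Equiv.Perm (Fin (2 * n + 1))) (j : Fin n) : ℂ :=
  if c.1 then
    (if c.2 then
      -(zv n v (τ ⟨2 * j.1 + 2, by have := j.isLt; omega⟩) (σ ⟨2 * j.1, by have := j.isLt; omega⟩) *
        (starRingEnd ℂ) (zv n v (τ ⟨2 * j.1 + 1, by have := j.isLt; omega⟩)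
          (σ ⟨2 * j.1 + 1, by have := j.isLt; omega⟩)))
    else
      zv n v (τ ⟨2 * j.1 + 2, by have := j.isLt; omega⟩) (σ ⟨2 * j.1 + 1, by have := j.isLt; omega⟩) *
        (starRingEnd ℂ) (zv n v (τ ⟨2 * j.1 + 1, by have := j.isLt; omega⟩)
          (σ ⟨2 * j.1, by have := j.isLt; omega⟩)))
  else
    (if c.2 then
      -(zv n v (τ ⟨2 * j.1 + 1, by have := j.isLt; omega⟩) (σ ⟨2 * j.1 + 1, by have := j.isLt; omega⟩) *
        (starRingEnd ℂ) (zv n v (τ ⟨2 * j.1 + 2, by have := j.isLt; omega⟩)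
          (σ ⟨2 * j.1, by have := j.isLt; omega⟩)))
    else
      zv n v (τ ⟨2 * j.1 + 1, by have := j.isLt; omega⟩) (σ ⟨2 * j.1, by have := j.isLt; omega⟩) *
        (starRingEnd ℂ) (zv n v (τ ⟨2 * j.1 + 2, by have := j.isLt; omega⟩)
          (σ ⟨2 * j.1 + 1, by have := j.isLt; omega⟩)))

lemma sum_Ee (σ : Equiv.Perm (Fin (2 * n))) (τ : Equiv.Perm (Fin (2 * n + 1))) (j : Fin n) :
    qq n v σ τ j + (starRingEnd ℂ) (qq n v σ τ j) = ∑ c : Bool × Bool, Ee n v c σ τ j := by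
  rw [Fintype.sum_prod_type, Fintype.sum_bool]
  simp only [Fintype.sum_bool, Ee]
  norm_num
  rw [qq]
  simp only [map_sub, _root_.map_mul, Complex.conj_conj]
  ring

lemma mul_flips_L (χ : Fin n → Bool) (σ : Equiv.Perm (Fin (2 * n))) (j : Fin n) :
    (σ * flips n χ) ⟨2 * j.1, by have := j.isLt; omega⟩ =
      if χ j then σ ⟨2 * j.1 + 1, by have := j.isLt; omega⟩
      else σ ⟨2 * j.1, by have := j.isLt; omega⟩ := by
  rw [Equiv.Perm.mul_apply, flips_L n χ j _ (by have := j.isLt; omega), apply_ite σ]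

lemma mul_flips_R (χ : Fin n → Bool) (σ : Equiv.Perm (Fin (2 * n))) (j : Fin n) :
    (σ * flips n χ) ⟨2 * j.1 + 1, by have := j.isLt; omega⟩ =
      if χ j then σ ⟨2 * j.1, by have := j.isLt; omega⟩
      else σ ⟨2 * j.1 + 1, by have := j.isLt; omega⟩ := by
  rw [Equiv.Perm.mul_apply, flips_R n χ j (by have := j.isLt; omega) _, apply_ite σ]

lemma mul_shp_1 (χ : Fin n → Bool) (τ : Equiv.Perm (Fin (2 * n + 1))) (j : Fin n) :
    (τ * shp n (flips n χ)) ⟨2 * j.1 + 1, by have := j.isLt; omega⟩ =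
      if χ j then τ ⟨2 * j.1 + 2, by have := j.isLt; omega⟩
      else τ ⟨2 * j.1 + 1, by have := j.isLt; omega⟩ := by
  have hs : (⟨2 * j.1 + 1, by have := j.isLt; omega⟩ : Fin (2 * n + 1)) =
      (⟨2 * j.1, by have := j.isLt; omega⟩ : Fin (2 * n)).succ := rfl
  rw [hs, Equiv.Perm.mul_apply, shp_succ, flips_L n χ j _ (by have := j.isLt; omega),
    apply_ite Fin.succ, apply_ite τ]
  rfl

lemma mul_shp_2 (χ : Fin n → Bool) (τ : Equiv.Perm (Fin (2 * n + 1))) (j : Fin n) :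
    (τ * shp n (flips n χ)) ⟨2 * j.1 + 2, by have := j.isLt; omega⟩ =
      if χ j then τ ⟨2 * j.1 + 1, by have := j.isLt; omega⟩
      else τ ⟨2 * j.1 + 2, by have := j.isLt; omega⟩ := by
  have hs : (⟨2 * j.1 + 2, by have := j.isLt; omega⟩ : Fin (2 * n + 1)) =
      (⟨2 * j.1 + 1, by have := j.isLt; omega⟩ : Fin (2 * n)).succ := rfl
  rw [hs, Equiv.Perm.mul_apply, shp_succ, flips_R n χ j (by have := j.isLt; omega) _,
    apply_ite Fin.succ, apply_ite τ]
  rfl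

lemma Ee_reindex (p : Fin n → Bool × Bool) (σ : Equiv.Perm (Fin (2 * n)))
    (τ : Equiv.Perm (Fin (2 * n + 1))) (j : Fin n) :
    Ee n v (p j) (σ * flips n (fun i => xor (p i).1 (p i).2))
        (τ * shp n (flips n (fun i => (p i).1))) j
      = (if (p j).2 then -1 else 1) * pl n v σ τ j := by
  rcases hpj : p j with ⟨ε, η⟩
  rcases ε <;> rcases η <;>
    simp [Ee, pl, mul_flips_L, mul_flips_R, mul_shp_1, mul_shp_2, hpj]


lemma sign_flips_C (χ : Fin n → Bool) :
    (((Equiv.Perm.sign (flips n χ)) : ℤ) : ℂ) = ∏ j : Fin n, (if χ j then (-1 : ℂ) else 1) := by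
  rw [sign_flips]
  have h := map_prod (Units.coeHom ℤ) (fun j => if χ j then (-1 : ℤˣ) else 1) Finset.univ
  simp only [Units.coeHom_apply] at h
  rw [h]
  push_cast
  refine Finset.prod_congr rfl fun j _ => ?_
  split <;> simp

lemma keyp (p : Fin n → Bool × Bool) :
    ∑ σ : Equiv.Perm (Fin (2 * n)), ∑ τ : Equiv.Perm (Fin (2 * n + 1)),
      ((Equiv.Perm.sign σ : ℤ) : ℂ) * ((Equiv.Perm.sign τ : ℤ) : ℂ) *
        ((tv n v (τ ⟨0, by omega⟩) : ℂ) * ∏ j : Fin n, Ee n v (p j) σ τ j)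
    = ∑ σ : Equiv.Perm (Fin (2 * n)), ∑ τ : Equiv.Perm (Fin (2 * n + 1)),
      ((Equiv.Perm.sign σ : ℤ) : ℂ) * ((Equiv.Perm.sign τ : ℤ) : ℂ) *
        ((tv n v (τ ⟨0, by omega⟩) : ℂ) * ∏ j : Fin n, pl n v σ τ j) := by
  have key : ∀ (σ : Equiv.Perm (Fin (2 * n))) (τ : Equiv.Perm (Fin (2 * n + 1))),
      ((Equiv.Perm.sign (σ * flips n (fun i => xor (p i).1 (p i).2)) : ℤ) : ℂ) *
        ((Equiv.Perm.sign (τ * shp n (flips n (fun i => (p i).1))) : ℤ) : ℂ) *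
        ((tv n v ((τ * shp n (flips n (fun i => (p i).1))) ⟨0, by omega⟩) : ℂ) *
          ∏ j : Fin n, Ee n v (p j) (σ * flips n (fun i => xor (p i).1 (p i).2))
            (τ * shp n (flips n (fun i => (p i).1))) j)
      = ((Equiv.Perm.sign σ : ℤ) : ℂ) * ((Equiv.Perm.sign τ : ℤ) : ℂ) *
        ((tv n v (τ ⟨0, by omega⟩) : ℂ) * ∏ j : Fin n, pl n v σ τ j) := by
    intro σ τ
    have h0 : (τ * shp n (flips n (fun i => (p i).1))) ⟨0, by omega⟩ = τ ⟨0, by omega⟩ := by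
      rw [Equiv.Perm.mul_apply, shp_zero]
    have hEe : (∏ j : Fin n, Ee n v (p j) (σ * flips n (fun i => xor (p i).1 (p i).2))
          (τ * shp n (flips n (fun i => (p i).1))) j)
        = (∏ j : Fin n, (if (p j).2 then (-1 : ℂ) else 1)) * ∏ j : Fin n, pl n v σ τ j := by
      rw [← Finset.prod_mul_distrib]
      exact Finset.prod_congr rfl fun j _ => Ee_reindex n v p σ τ j
    have hsg : ((Equiv.Perm.sign (σ * flips n (fun i => xor (p i).1 (p i).2)) : ℤ) : ℂ)
        = ((Equiv.Perm.sign σ : ℤ) : ℂ) *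
            ∏ j : Fin n, (if xor (p j).1 (p j).2 then (-1 : ℂ) else 1) := by
      rw [Equiv.Perm.sign_mul, Units.val_mul]
      push_cast
      rw [sign_flips_C]
    have hsh : ((Equiv.Perm.sign (τ * shp n (flips n (fun i => (p i).1))) : ℤ) : ℂ)
        = ((Equiv.Perm.sign τ : ℤ) : ℂ) * ∏ j : Fin n, (if (p j).1 then (-1 : ℂ) else 1) := by
      rw [Equiv.Perm.sign_mul, Units.val_mul]
      push_cast
      rw [sign_shp, sign_flips_C]
    rw [h0, hEe, hsg, hsh]
    have hcancel : (∏ j : Fin n, (if xor (p j).1 (p j).2 then (-1 : ℂ) else 1)) *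
        ((∏ j : Fin n, (if (p j).1 then (-1 : ℂ) else 1)) *
          (∏ j : Fin n, (if (p j).2 then (-1 : ℂ) else 1))) = 1 := by
      rw [← Finset.prod_mul_distrib, ← Finset.prod_mul_distrib]
      refine Finset.prod_eq_one fun j _ => ?_
      rcases (p j).1 <;> rcases (p j).2 <;> norm_num
    calc ((Equiv.Perm.sign σ : ℤ) : ℂ) *
          (∏ j : Fin n, (if xor (p j).1 (p j).2 then (-1 : ℂ) else 1)) *
          (((Equiv.Perm.sign τ : ℤ) : ℂ) * ∏ j : Fin n, (if (p j).1 then (-1 : ℂ) else 1)) *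
          ((tv n v (τ ⟨0, by omega⟩) : ℂ) *
            ((∏ j : Fin n, (if (p j).2 then (-1 : ℂ) else 1)) * ∏ j : Fin n, pl n v σ τ j))
        = ((Equiv.Perm.sign σ : ℤ) : ℂ) * ((Equiv.Perm.sign τ : ℤ) : ℂ) *
            ((tv n v (τ ⟨0, by omega⟩) : ℂ) * ∏ j : Fin n, pl n v σ τ j) *
            ((∏ j : Fin n, (if xor (p j).1 (p j).2 then (-1 : ℂ) else 1)) *
              ((∏ j : Fin n, (if (p j).1 then (-1 : ℂ) else 1)) *
                (∏ j : Fin n, (if (p j).2 then (-1 : ℂ) else 1)))) := by ring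
      _ = _ := by rw [hcancel, mul_one]
  calc ∑ σ : Equiv.Perm (Fin (2 * n)), ∑ τ : Equiv.Perm (Fin (2 * n + 1)),
        ((Equiv.Perm.sign σ : ℤ) : ℂ) * ((Equiv.Perm.sign τ : ℤ) : ℂ) *
          ((tv n v (τ ⟨0, by omega⟩) : ℂ) * ∏ j : Fin n, Ee n v (p j) σ τ j)
      = ∑ σ : Equiv.Perm (Fin (2 * n)), ∑ τ : Equiv.Perm (Fin (2 * n + 1)),
        ((Equiv.Perm.sign (σ * flips n (fun i => xor (p i).1 (p i).2)) : ℤ) : ℂ) *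
          ((Equiv.Perm.sign (τ * shp n (flips n (fun i => (p i).1))) : ℤ) : ℂ) *
          ((tv n v ((τ * shp n (flips n (fun i => (p i).1))) ⟨0, by omega⟩) : ℂ) *
            ∏ j : Fin n, Ee n v (p j) (σ * flips n (fun i => xor (p i).1 (p i).2))
              (τ * shp n (flips n (fun i => (p i).1))) j) := by
        rw [← Equiv.sum_comp (Equiv.mulRight (flips n (fun i => xor (p i).1 (p i).2)))
          (fun σ => ∑ τ : Equiv.Perm (Fin (2 * n + 1)),
            ((Equiv.Perm.sign σ : ℤ) : ℂ) * ((Equiv.Perm.sign τ : ℤ) : ℂ) *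
              ((tv n v (τ ⟨0, by omega⟩) : ℂ) * ∏ j : Fin n, Ee n v (p j) σ τ j))]
        refine Finset.sum_congr rfl fun σ _ => ?_
        rw [← Equiv.sum_comp (Equiv.mulRight (shp n (flips n (fun i => (p i).1))))]
        rfl
    _ = _ := by
        refine Finset.sum_congr rfl fun σ _ => Finset.sum_congr rfl fun τ _ => key σ τ

theorem phi_eq : ((Phi n v : ℝ) : ℂ) =
    ∑ σ : Equiv.Perm (Fin (2 * n)), ((Equiv.Perm.sign σ : ℤ) : ℂ) * (Dm n v σ).det := by
  have homst : ∀ (σ : Equiv.Perm (Fin (2 * n))) (τ : Equiv.Perm (Fin (2 * n + 1))) (j : Fin n),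
      ((Omst n (σ ⟨2 * j.1, by have := j.isLt; omega⟩) (σ ⟨2 * j.1 + 1, by have := j.isLt; omega⟩)
          (v (τ ⟨2 * j.1 + 1, by have := j.isLt; omega⟩))
          (v (τ ⟨2 * j.1 + 2, by have := j.isLt; omega⟩)) : ℝ) : ℂ)
        = (qq n v σ τ j + (starRingEnd ℂ) (qq n v σ τ j)) / 2 := by
    intro σ τ j
    rw [omst_re, Complex.add_conj]
    push_cast
    rw [qq]
    ring
  have hprod : ∀ (σ : Equiv.Perm (Fin (2 * n))) (τ : Equiv.Perm (Fin (2 * n + 1))),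
      (∏ j : Fin n,
          ((Omst n (σ ⟨2 * j.1, by have := j.isLt; omega⟩)
            (σ ⟨2 * j.1 + 1, by have := j.isLt; omega⟩)
            (v (τ ⟨2 * j.1 + 1, by have := j.isLt; omega⟩))
            (v (τ ⟨2 * j.1 + 2, by have := j.isLt; omega⟩)) : ℝ) : ℂ))
        = (1 / 2 ^ n : ℂ) * ∑ p : Fin n → Bool × Bool, ∏ j : Fin n, Ee n v (p j) σ τ j := by
    intro σ τ
    calc (∏ j : Fin n, ((Omst n (σ ⟨2 * j.1, by have := j.isLt; omega⟩)
            (σ ⟨2 * j.1 + 1, by have := j.isLt; omega⟩)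
            (v (τ ⟨2 * j.1 + 1, by have := j.isLt; omega⟩))
            (v (τ ⟨2 * j.1 + 2, by have := j.isLt; omega⟩)) : ℝ) : ℂ))
        = ∏ j : Fin n, ((qq n v σ τ j + (starRingEnd ℂ) (qq n v σ τ j)) / 2) :=
          Finset.prod_congr rfl fun j _ => homst σ τ j
      _ = (∏ j : Fin n, (qq n v σ τ j + (starRingEnd ℂ) (qq n v σ τ j))) / 2 ^ n := by
          rw [Finset.prod_div_distrib, Finset.prod_const, Finset.card_univ, Fintype.card_fin]
      _ = (∏ j : Fin n, ∑ c : Bool × Bool, Ee n v c σ τ j) / 2 ^ n := by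
          rw [Finset.prod_congr rfl fun j _ => sum_Ee n v σ τ j]
      _ = (1 / 2 ^ n : ℂ) * ∑ p : Fin n → Bool × Bool, ∏ j : Fin n, Ee n v (p j) σ τ j := by
          rw [Fintype.prod_sum]
          ring
  calc ((Phi n v : ℝ) : ℂ)
      = ∑ σ : Equiv.Perm (Fin (2 * n)), ((Equiv.Perm.sign σ : ℤ) : ℂ) *
          ((1 / 2 ^ n : ℂ) * ∑ τ : Equiv.Perm (Fin (2 * n + 1)),
            ((Equiv.Perm.sign τ : ℤ) : ℂ) * ((tv n v (τ ⟨0, by omega⟩) : ℂ) *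
              ∏ j : Fin n,
                ((Omst n (σ ⟨2 * j.1, by have := j.isLt; omega⟩)
                  (σ ⟨2 * j.1 + 1, by have := j.isLt; omega⟩)
                  (v (τ ⟨2 * j.1 + 1, by have := j.isLt; omega⟩))
                  (v (τ ⟨2 * j.1 + 2, by have := j.isLt; omega⟩)) : ℝ) : ℂ))) := by
        rw [Phi]
        push_cast
        rfl
    _ = ∑ σ : Equiv.Perm (Fin (2 * n)), ∑ τ : Equiv.Perm (Fin (2 * n + 1)),
          ∑ p : Fin n → Bool × Bool, (1 / 4 ^ n : ℂ) *
            (((Equiv.Perm.sign σ : ℤ) : ℂ) * ((Equiv.Perm.sign τ : ℤ) : ℂ) *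
              ((tv n v (τ ⟨0, by omega⟩) : ℂ) * ∏ j : Fin n, Ee n v (p j) σ τ j)) := by
        refine Finset.sum_congr rfl fun σ _ => ?_
        rw [show (∑ τ : Equiv.Perm (Fin (2 * n + 1)),
            ((Equiv.Perm.sign τ : ℤ) : ℂ) * ((tv n v (τ ⟨0, by omega⟩) : ℂ) *
              ∏ j : Fin n,
                ((Omst n (σ ⟨2 * j.1, by have := j.isLt; omega⟩)
                  (σ ⟨2 * j.1 + 1, by have := j.isLt; omega⟩)
                  (v (τ ⟨2 * j.1 + 1, by have := j.isLt; omega⟩))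
                  (v (τ ⟨2 * j.1 + 2, by have := j.isLt; omega⟩)) : ℝ) : ℂ)))
          = ∑ τ : Equiv.Perm (Fin (2 * n + 1)),
            ((Equiv.Perm.sign τ : ℤ) : ℂ) * ((tv n v (τ ⟨0, by omega⟩) : ℂ) *
              ((1 / 2 ^ n : ℂ) * ∑ p : Fin n → Bool × Bool, ∏ j : Fin n, Ee n v (p j) σ τ j))
          from Finset.sum_congr rfl fun τ _ => by rw [hprod σ τ]]
        simp only [Finset.mul_sum]
        refine Finset.sum_congr rfl fun τ _ => Finset.sum_congr rfl fun p _ => ?_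
        have h4 : (4 : ℂ) ^ n = 2 ^ n * 2 ^ n := by rw [← mul_pow]; norm_num
        field_simp [h4]
        rw [h4]; ring
    _ = ∑ p : Fin n → Bool × Bool, (1 / 4 ^ n : ℂ) *
          ∑ σ : Equiv.Perm (Fin (2 * n)), ∑ τ : Equiv.Perm (Fin (2 * n + 1)),
            ((Equiv.Perm.sign σ : ℤ) : ℂ) * ((Equiv.Perm.sign τ : ℤ) : ℂ) *
              ((tv n v (τ ⟨0, by omega⟩) : ℂ) * ∏ j : Fin n, Ee n v (p j) σ τ j) := by
        rw [show (∑ σ : Equiv.Perm (Fin (2 * n)), ∑ τ : Equiv.Perm (Fin (2 * n + 1)),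
            ∑ p : Fin n → Bool × Bool, (1 / 4 ^ n : ℂ) *
              (((Equiv.Perm.sign σ : ℤ) : ℂ) * ((Equiv.Perm.sign τ : ℤ) : ℂ) *
                ((tv n v (τ ⟨0, by omega⟩) : ℂ) * ∏ j : Fin n, Ee n v (p j) σ τ j)))
          = ∑ σ : Equiv.Perm (Fin (2 * n)), ∑ p : Fin n → Bool × Bool,
              ∑ τ : Equiv.Perm (Fin (2 * n + 1)), (1 / 4 ^ n : ℂ) *
              (((Equiv.Perm.sign σ : ℤ) : ℂ) * ((Equiv.Perm.sign τ : ℤ) : ℂ) *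
                ((tv n v (τ ⟨0, by omega⟩) : ℂ) * ∏ j : Fin n, Ee n v (p j) σ τ j))
          from Finset.sum_congr rfl fun σ _ => Finset.sum_comm]
        rw [Finset.sum_comm]
        refine Finset.sum_congr rfl fun p _ => ?_
        rw [Finset.mul_sum]
        refine Finset.sum_congr rfl fun σ _ => ?_
        rw [Finset.mul_sum]
    _ = ∑ p : Fin n → Bool × Bool, (1 / 4 ^ n : ℂ) *
          ∑ σ : Equiv.Perm (Fin (2 * n)), ∑ τ : Equiv.Perm (Fin (2 * n + 1)),
            ((Equiv.Perm.sign σ : ℤ) : ℂ) * ((Equiv.Perm.sign τ : ℤ) : ℂ) *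
              ((tv n v (τ ⟨0, by omega⟩) : ℂ) * ∏ j : Fin n, pl n v σ τ j) :=
        Finset.sum_congr rfl fun p _ => by rw [keyp]
    _ = ∑ σ : Equiv.Perm (Fin (2 * n)), ((Equiv.Perm.sign σ : ℤ) : ℂ) * (Dm n v σ).det := by
        rw [Finset.sum_const, Finset.card_univ, Fintype.card_fun]
        have hcard : (Fintype.card (Bool × Bool)) ^ (Fintype.card (Fin n)) = 4 ^ n := by
          simp
        rw [hcard, nsmul_eq_mul]
        push_cast
        have h40 : ((4 : ℂ) ^ n) ≠ 0 := pow_ne_zero _ (by norm_num)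
        rw [show ((4:ℂ))^n * ((1 / 4 ^ n) * ∑ σ : Equiv.Perm (Fin (2 * n)),
            ∑ τ : Equiv.Perm (Fin (2 * n + 1)),
            ((Equiv.Perm.sign σ : ℤ) : ℂ) * ((Equiv.Perm.sign τ : ℤ) : ℂ) *
              ((tv n v (τ ⟨0, by omega⟩) : ℂ) * ∏ j : Fin n, pl n v σ τ j))
          = ((4:ℂ)^n / 4^n) * ∑ σ : Equiv.Perm (Fin (2 * n)),
            ∑ τ : Equiv.Perm (Fin (2 * n + 1)),
            ((Equiv.Perm.sign σ : ℤ) : ℂ) * ((Equiv.Perm.sign τ : ℤ) : ℂ) *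
              ((tv n v (τ ⟨0, by omega⟩) : ℂ) * ∏ j : Fin n, pl n v σ τ j) from by ring,
          div_self h40, one_mul]
        refine Finset.sum_congr rfl fun σ _ => ?_
        rw [det_Dm, Finset.mul_sum]
        refine Finset.sum_congr rfl fun τ _ => by ring


lemma abs_det_le_one {m : ℕ} (hm : 0 < m) (A : Matrix (Fin m) (Fin m) ℂ)
    (h : ∀ a, ∑ i, Complex.normSq (A a i) = 1) : ‖A.det‖ ≤ 1 := by
  have hpsd : (A * Aᴴ).PosSemidef := Matrix.posSemidef_self_mul_conjTranspose A
  have hherm : (A * Aᴴ).IsHermitian := hpsd.1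
  have hdet : (A * Aᴴ).det = ∏ i, (hherm.eigenvalues i : ℂ) := hherm.det_eq_prod_eigenvalues
  have htr : (A * Aᴴ).trace = (m : ℂ) := by
    rw [Matrix.trace]
    have hd : ∀ a, (A * Aᴴ).diag a = 1 := by
      intro a
      simp only [Matrix.diag_apply, Matrix.mul_apply, Matrix.conjTranspose_apply]
      rw [show (∑ i, A a i * star (A a i)) = ∑ i, (Complex.normSq (A a i) : ℂ) from
        Finset.sum_congr rfl fun i _ => Complex.mul_conj _]
      rw [← Complex.ofReal_sum, h a, Complex.ofReal_one]
    rw [show (∑ a, (A * Aᴴ).diag a) = ∑ _a : Fin m, (1:ℂ) from Finset.sum_congr rfl fun a _ => hd a]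
    simp
  have htrU : (A * Aᴴ).trace = ∑ i, (hherm.eigenvalues i : ℂ) := by
    conv_lhs => rw [hherm.spectral_theorem]
    rw [Unitary.conjStarAlgAut_apply]
    rw [Matrix.trace_mul_comm, ← Matrix.mul_assoc]
    rw [Matrix.mem_unitaryGroup_iff'.mp (Matrix.IsHermitian.eigenvectorUnitary hherm).2, Matrix.one_mul,
      Matrix.trace_diagonal]
    rfl
  have htr2 : ∑ i, hherm.eigenvalues i = (m : ℝ) := by
    have := htrU.symm.trans htr
    exact_mod_cast this
  have hnn : ∀ i, 0 ≤ hherm.eigenvalues i := hpsd.eigenvalues_nonneg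
  have hprodle : ∏ i, hherm.eigenvalues i ≤ 1 := by
    have hw : ∑ _i : Fin m, (1 / m : ℝ) = 1 := by
      rw [Finset.sum_const, Finset.card_univ, Fintype.card_fin, nsmul_eq_mul]
      field_simp
    have hamgm := Real.geom_mean_le_arith_mean_weighted Finset.univ (fun _ => (1 / m : ℝ))
      hherm.eigenvalues (fun i _ => by positivity) hw (fun i _ => hnn i)
    have hsum : ∑ i, (1 / m : ℝ) * hherm.eigenvalues i = 1 := by
      rw [← Finset.mul_sum, htr2]
      field_simp
    rw [hsum] at hamgm
    have heq : ∏ i, hherm.eigenvalues i ^ (1 / m : ℝ)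
        = (∏ i, hherm.eigenvalues i) ^ (1 / m : ℝ) :=
      Real.finset_prod_rpow _ _ (fun i _ => hnn i) _
    rw [heq] at hamgm
    by_contra hlt
    push_neg at hlt
    have h1m : 0 < (1 / m : ℝ) := by positivity
    have := Real.one_lt_rpow_iff_of_pos (by linarith : (0:ℝ) < ∏ i, hherm.eigenvalues i)
      (y := (1 / m : ℝ))
    have h2 : (1:ℝ) < (∏ i, hherm.eigenvalues i) ^ (1 / m : ℝ) := this.mpr (Or.inl ⟨hlt, h1m⟩)
    linarith
  have habs2 : Complex.normSq A.det = ∏ i, hherm.eigenvalues i := by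
    have h1 : (A * Aᴴ).det = A.det * (starRingEnd ℂ) A.det := by
      rw [Matrix.det_mul, Matrix.det_conjTranspose]
      rfl
    rw [Complex.mul_conj] at h1
    have h2 := h1.symm.trans hdet
    rw [← Complex.ofReal_prod] at h2
    exact_mod_cast h2
  rw [Complex.norm_def, habs2, show (1:ℝ) = Real.sqrt 1 from by simp]
  exact Real.sqrt_le_sqrt hprodle


lemma Dm_row_norm (σ : Equiv.Perm (Fin (2 * n))) (a : Fin (2 * n + 1)) :
    ∑ i : Fin (2 * n + 1), Complex.normSq (Dm n v σ a i)
      = (tv n v a) ^ 2 + ∑ k : Fin (2 * n), Complex.normSq (zv n v a k) := by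
  rw [Fin.sum_univ_succ]
  congr 1
  · show Complex.normSq ((tv n v a : ℂ)) = _
    rw [Complex.normSq_ofReal]
    ring
  · rw [show (∑ m : Fin (2 * n), Complex.normSq (Dm n v σ a m.succ))
        = ∑ m : Fin (2 * n), Complex.normSq (zv n v a (σ m)) from
      Finset.sum_congr rfl fun m _ => by
        show Complex.normSq (if m.1 % 2 = 0 then zv n v a (σ m)
          else (starRingEnd ℂ) (zv n v a (σ m))) = _
        split
        · rfl
        · rw [Complex.normSq_conj]]
    exact Equiv.sum_comp σ (fun k => Complex.normSq (zv n v a k))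

lemma diag_norm (h2 : ∀ a, ∀ i j : Fin (2 * n + 2), 2 ≤ i.1 ∧ 2 ≤ j.1 → v a i j = 0)
    (a : Fin (2 * n + 1))
    (hd : (∑ i : Fin (2 * n + 2), ∑ j : Fin (2 * n + 2),
      if i < j then v a i j * v a i j else 0) = 1) :
    (tv n v a) ^ 2 + ∑ k : Fin (2 * n), Complex.normSq (zv n v a k) = 1 := by
  have peel : ∀ (F : Fin (2 * n + 2) → ℝ), (∑ i, F i)
      = F ⟨0, by omega⟩ + (F ⟨1, by omega⟩ + ∑ k : Fin (2 * n), F (col n k)) := by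
    intro F
    rw [Fin.sum_univ_succ, Fin.sum_univ_succ]
    rfl
  rw [peel] at hd
  have h0 : (∑ j : Fin (2 * n + 2), if (⟨0, by omega⟩ : Fin (2 * n + 2)) < j
        then v a ⟨0, by omega⟩ j * v a ⟨0, by omega⟩ j else 0)
      = (tv n v a) ^ 2 + ∑ k : Fin (2 * n), (v a ⟨0, by omega⟩ (col n k)) ^ 2 := by
    rw [peel]
    rw [if_neg (show ¬ ((⟨0, by omega⟩ : Fin (2 * n + 2)) < ⟨0, by omega⟩) from by
      rw [Fin.mk_lt_mk]; omega)]
    rw [if_pos (show (⟨0, by omega⟩ : Fin (2 * n + 2)) < ⟨1, by omega⟩ from by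
      rw [Fin.mk_lt_mk]; omega)]
    rw [show (∑ k : Fin (2 * n), if (⟨0, by omega⟩ : Fin (2 * n + 2)) < col n k
          then v a ⟨0, by omega⟩ (col n k) * v a ⟨0, by omega⟩ (col n k) else 0)
        = ∑ k : Fin (2 * n), (v a ⟨0, by omega⟩ (col n k)) ^ 2 from
      Finset.sum_congr rfl fun k _ => by
        rw [if_pos (show (⟨0, by omega⟩ : Fin (2 * n + 2)) < col n k from by
          rw [_root_.col, Fin.mk_lt_mk]; omega)]
        ring]
    rw [tv]
    ring
  have h1 : (∑ j : Fin (2 * n + 2), if (⟨1, by omega⟩ : Fin (2 * n + 2)) < j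
        then v a ⟨1, by omega⟩ j * v a ⟨1, by omega⟩ j else 0)
      = ∑ k : Fin (2 * n), (v a ⟨1, by omega⟩ (col n k)) ^ 2 := by
    rw [peel]
    rw [if_neg (show ¬ ((⟨1, by omega⟩ : Fin (2 * n + 2)) < ⟨0, by omega⟩) from by
      rw [Fin.mk_lt_mk]; omega)]
    rw [if_neg (show ¬ ((⟨1, by omega⟩ : Fin (2 * n + 2)) < ⟨1, by omega⟩) from by
      rw [Fin.mk_lt_mk]; omega)]
    rw [zero_add, zero_add]
    refine Finset.sum_congr rfl fun k _ => ?_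
    rw [if_pos (show (⟨1, by omega⟩ : Fin (2 * n + 2)) < col n k from by
      rw [_root_.col, Fin.mk_lt_mk]; omega)]
    ring
  have hrest : (∑ k : Fin (2 * n), ∑ j : Fin (2 * n + 2),
      if col n k < j then v a (col n k) j * v a (col n k) j else 0) = 0 := by
    refine Finset.sum_eq_zero fun k _ => Finset.sum_eq_zero fun j _ => ?_
    split
    · rename_i hlt
      rw [h2 a (col n k) j ⟨by simp [_root_.col], by
        have := hlt
        rw [Fin.lt_def] at this
        simp only [_root_.col] at this ⊢
        omega⟩]
      ring
    · rfl
  rw [h0, h1, hrest] at hd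
  have hz : ∑ k : Fin (2 * n), Complex.normSq (zv n v a k)
      = ∑ k : Fin (2 * n), ((v a ⟨0, by omega⟩ (col n k)) ^ 2 + (v a ⟨1, by omega⟩ (col n k)) ^ 2) := by
    refine Finset.sum_congr rfl fun k _ => ?_
    rw [zv, Complex.normSq_mk]
    ring
  rw [hz, Finset.sum_add_distrib]
  linarith [hd]

theorem part1 (h2 : ∀ a, ∀ i j : Fin (2 * n + 2), 2 ≤ i.1 ∧ 2 ≤ j.1 → v a i j = 0)
    (h3 : ∀ a b, (∑ i : Fin (2 * n + 2), ∑ j : Fin (2 * n + 2),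
      if i < j then v a i j * v b i j else 0) = if a = b then 1 else 0) :
    |Phi n v| ≤ (Nat.factorial (2 * n) : ℝ) := by
  have habs : |Phi n v| = ‖((Phi n v : ℝ) : ℂ)‖ := by rw [Complex.norm_real, Real.norm_eq_abs]
  rw [habs, phi_eq]
  calc ‖(∑ σ : Equiv.Perm (Fin (2 * n)),
        ((Equiv.Perm.sign σ : ℤ) : ℂ) * (Dm n v σ).det)‖
      ≤ ∑ σ : Equiv.Perm (Fin (2 * n)),
          ‖(((Equiv.Perm.sign σ : ℤ) : ℂ) * (Dm n v σ).det)‖ :=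
        norm_sum_le _ _
    _ ≤ ∑ _σ : Equiv.Perm (Fin (2 * n)), (1 : ℝ) := by
        refine Finset.sum_le_sum fun σ _ => ?_
        rw [norm_mul]
        have hs : ‖(((Equiv.Perm.sign σ : ℤ) : ℂ))‖ = 1 := by
          rcases Int.units_eq_one_or (Equiv.Perm.sign σ) with h | h <;> simp [h]
        rw [hs, one_mul]
        refine abs_det_le_one (by omega) _ fun a => ?_
        rw [Dm_row_norm]
        exact diag_norm n v h2 a (by simpa using h3 a a)
    _ = (Nat.factorial (2 * n) : ℝ) := by
        rw [Finset.sum_const, Finset.card_univ, Fintype.card_perm, Fintype.card_fin,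
          nsmul_eq_mul, mul_one]

end Main

section Equality

variable (n : ℕ)

/-- The distinguished frame. -/
noncomputable def vF : Fin (2 * n + 1) → Matrix (Fin (2 * n + 2)) (Fin (2 * n + 2)) ℝ :=
  fun a => Fskew n ⟨0, by omega⟩ ⟨a.1 + 1, Nat.succ_lt_succ (by have := a.isLt; omega)⟩

lemma tv_vF (a : Fin (2 * n + 1)) : tv n (vF n) a = if a.1 = 0 then 1 else 0 := by
  rw [tv]
  simp only [vF, Fskew, Matrix.of_apply, Fin.mk.injEq, true_and, false_and, and_false, if_false]
  split_ifs <;> first | rfl | (exfalso; omega) | (exfalso; tauto)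

lemma zv_vF (a : Fin (2 * n + 1)) (k : Fin (2 * n)) :
    zv n (vF n) a k = ((if a.1 = k.1 + 1 then (1 : ℝ) else 0 : ℝ) : ℂ) := by
  have hre : (zv n (vF n) a k).re = vF n a ⟨0, by omega⟩ (col n k) := rfl
  have him : (zv n (vF n) a k).im = vF n a ⟨1, by omega⟩ (col n k) := rfl
  rw [Complex.ext_iff, hre, him]
  constructor
  · rw [Complex.ofReal_re]
    simp only [vF, Fskew, Matrix.of_apply, _root_.col, Fin.mk.injEq, true_and, false_and, and_false, if_false]
    split_ifs <;> first | rfl | (exfalso; omega) | (exfalso; tauto)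
  · rw [Complex.ofReal_im]
    simp only [vF, Fskew, Matrix.of_apply, _root_.col, Fin.mk.injEq, true_and, false_and, and_false, if_false]
    split_ifs <;> first | rfl | (exfalso; omega) | (exfalso; tauto)

lemma permMatrixT_apply (π : Equiv.Perm (Fin (2 * n + 1))) (a i : Fin (2 * n + 1)) :
    ((π.permMatrix ℂ)ᵀ) a i = if π i = a then 1 else 0 := by
  rw [Matrix.transpose_apply, Equiv.Perm.permMatrix]
  simp [PEquiv.toMatrix, Equiv.toPEquiv, Option.mem_def, eq_comm]

lemma Dm_vF (σ : Equiv.Perm (Fin (2 * n))) :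
    Dm n (vF n) σ = ((shp n σ).permMatrix ℂ)ᵀ := by
  ext a i
  rw [permMatrixT_apply]
  refine Fin.cases ?_ (fun m => ?_) i
  · show ((tv n (vF n) a : ℝ) : ℂ) = _
    have h00 : shp n σ 0 = 0 := by
      rw [shp]
      exact Equiv.Perm.decomposeFin_symm_apply_zero 0 σ
    rw [tv_vF, h00]
    by_cases h : a.1 = 0
    · rw [if_pos h, if_pos (by rw [Fin.ext_iff, Fin.val_zero]; omega)]
      simp
    · rw [if_neg h, if_neg (by rw [Fin.ext_iff, Fin.val_zero]; omega)]
      simp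
  · show (if m.1 % 2 = 0 then zv n (vF n) a (σ m) else (starRingEnd ℂ) (zv n (vF n) a (σ m))) = _
    rw [show (if m.1 % 2 = 0 then zv n (vF n) a (σ m)
        else (starRingEnd ℂ) (zv n (vF n) a (σ m))) = zv n (vF n) a (σ m) from by
      split
      · rfl
      · rw [zv_vF, Complex.conj_ofReal]]
    rw [zv_vF, shp_succ]
    by_cases h : a.1 = (σ m).1 + 1
    · rw [if_pos h, if_pos (by rw [Fin.ext_iff, Fin.val_succ]; omega)]
      simp
    · rw [if_neg h, if_neg (by rw [Fin.ext_iff, Fin.val_succ]; omega)]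
      simp

theorem part2 : Phi n (vF n) = (Nat.factorial (2 * n) : ℝ) := by
  have hC : ((Phi n (vF n) : ℝ) : ℂ) = ((Nat.factorial (2 * n) : ℝ) : ℂ) := by
    rw [phi_eq]
    have hdet : ∀ σ : Equiv.Perm (Fin (2 * n)),
        (Dm n (vF n) σ).det = ((Equiv.Perm.sign σ : ℤ) : ℂ) := by
      intro σ
      rw [Dm_vF, Matrix.det_transpose, Matrix.det_permutation, sign_shp]
    rw [Finset.sum_congr rfl fun σ _ => by rw [hdet σ]]
    rw [show (∑ σ : Equiv.Perm (Fin (2 * n)),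
        ((Equiv.Perm.sign σ : ℤ) : ℂ) * ((Equiv.Perm.sign σ : ℤ) : ℂ))
      = ∑ _σ : Equiv.Perm (Fin (2 * n)), (1 : ℂ) from Finset.sum_congr rfl fun σ _ => by
        rcases Int.units_eq_one_or (Equiv.Perm.sign σ) with h | h <;> simp [h]]
    rw [Finset.sum_const, Finset.card_univ, Fintype.card_perm, Fintype.card_fin,
      nsmul_eq_mul, mul_one]
    push_cast
    rfl
  exact_mod_cast hC

end Equality

end Stmt13

theorem stmt_13 (n : ℕ) (hn : 1 ≤ n) :
    (∀ v : Fin (2 * n + 1) → Matrix (Fin (2 * n + 2)) (Fin (2 * n + 2)) ℝ,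
      (∀ a, (v a)ᵀ = -(v a)) →
      (∀ a, ∀ i j : Fin (2 * n + 2), 2 ≤ i.1 ∧ 2 ≤ j.1 → v a i j = 0) →
      (∀ a b, (∑ i : Fin (2 * n + 2), ∑ j : Fin (2 * n + 2), if i < j then v a i j * v b i j else 0)
        = if a = b then 1 else 0) →
      |Phi n v| ≤ (Nat.factorial (2 * n) : ℝ)) ∧
    Phi n (fun a => Fskew n ⟨0, by omega⟩ ⟨a.1 + 1, by have := a.isLt; omega⟩) =
      (Nat.factorial (2 * n) : ℝ) := by
  constructor
  · intro v _h1 h2 h3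
    exact Stmt13.part1 n v h2 h3
  · exact Stmt13.part2 n
end

section
/- Let V be the real vector space of 8×8 real matrices. For any orthonormal vectors v₁, …, v₈ ∈ V (so that ξ = v₁ ∧ ⋯ ∧ v₈ is a decomposable unit 8-vector), one has (Σ_{i=1}^{8} ξ_{i,i,…,i})² ≤ 1, where ξ_{i,…,i} is the Plücker coordinate with all row indices equal to i. -/
/- STATEMENT 17: For orthonormal `v₁,…,v₈` in `V = Fin 8 → Fin 8 → ℝ` (so that
`ξ = v₁∧⋯∧v₈` is a decomposable unit 8-vector), the Plücker coordinates satisfy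
`(∑_{i=1}^{8} ξ_{i,…,i})² ≤ 1`. -/

open Matrix Finset

lemma trace_eq_sum_eigs {n : Type*} [Fintype n] [DecidableEq n]
    {A : Matrix n n ℝ} (hA : A.IsHermitian) :
    A.trace = ∑ i, hA.eigenvalues i := by
  conv_lhs => rw [hA.spectral_theorem, Unitary.conjStarAlgAut_apply]
  rw [Matrix.trace_mul_cycle]
  rw [Unitary.coe_star_mul_self]
  simp [Matrix.trace_diagonal]

lemma det_sq_eq {n : Type*} [Fintype n] [DecidableEq n] (B : Matrix n n ℝ) :
    B.det ^ 2 = (Bᵀ * B).det := by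
  rw [Matrix.det_mul, Matrix.det_transpose, sq]

lemma det_prod_bound (B : Matrix (Fin 8) (Fin 8) ℝ) :
    |B.det| ≤ ((Bᵀ * B).trace / 8) ^ 4 := by
  have hps : (Bᵀ * B).PosSemidef := by
    have := Matrix.posSemidef_conjTranspose_mul_self B
    rwa [Matrix.conjTranspose_eq_transpose_of_trivial] at this
  have hA : (Bᵀ * B).IsHermitian := hps.isHermitian
  set lam := hA.eigenvalues with hlam
  have hnn : ∀ i, 0 ≤ lam i := hps.eigenvalues_nonneg
  have hdet : (Bᵀ * B).det = ∏ i, lam i := by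
    rw [hA.det_eq_prod_eigenvalues]
    norm_cast
  have htr : (Bᵀ * B).trace = ∑ i, lam i := trace_eq_sum_eigs hA
  have hgm : ∏ i, lam i ^ ((8:ℝ)⁻¹) ≤ ∑ i, (8:ℝ)⁻¹ * lam i := by
    apply Real.geom_mean_le_arith_mean_weighted
    · intro i _; norm_num
    · rw [Finset.sum_const, Finset.card_univ]; norm_num
    · intro i _; exact hnn i
  have hprod : ∏ i, lam i = (∏ i, lam i ^ ((8:ℝ)⁻¹)) ^ (8:ℕ) := by
    rw [← Finset.prod_pow]
    refine Finset.prod_congr rfl fun i _ => ?_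
    rw [← Real.rpow_natCast (lam i ^ ((8:ℝ)⁻¹)) 8, ← Real.rpow_mul (hnn i)]
    norm_num
  have h8 : ∏ i, lam i ≤ ((Bᵀ * B).trace / 8) ^ (8:ℕ) := by
    rw [hprod]
    have : (∑ i, (8:ℝ)⁻¹ * lam i) = (Bᵀ * B).trace / 8 := by
      rw [htr, Finset.sum_div]
      exact Finset.sum_congr rfl fun i _ => by ring
    calc (∏ i, lam i ^ ((8:ℝ)⁻¹)) ^ (8:ℕ)
        ≤ (∑ i, (8:ℝ)⁻¹ * lam i) ^ (8:ℕ) := by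
          apply pow_le_pow_left₀ _ hgm
          exact Finset.prod_nonneg fun i _ => Real.rpow_nonneg (hnn i) _
      _ = ((Bᵀ * B).trace / 8) ^ (8:ℕ) := by rw [this]
  have hsq : B.det ^ 2 = ∏ i, lam i := by
    rw [det_sq_eq, hdet]
  have htnn : 0 ≤ (Bᵀ * B).trace := by
    rw [htr]; exact Finset.sum_nonneg fun i _ => hnn i
  have : B.det ^ 2 ≤ (((Bᵀ * B).trace / 8) ^ 4) ^ 2 := by
    rw [hsq, ← pow_mul]; exact h8
  calc |B.det| = Real.sqrt (B.det ^ 2) := (Real.sqrt_sq_eq_abs _).symm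
    _ ≤ Real.sqrt ((((Bᵀ * B).trace / 8) ^ 4) ^ 2) := Real.sqrt_le_sqrt this
    _ = |((Bᵀ * B).trace / 8) ^ 4| := Real.sqrt_sq_eq_abs _
    _ = ((Bᵀ * B).trace / 8) ^ 4 := abs_of_nonneg (by positivity)

/-- Plücker coordinate `ξ_{i₁,…,i₈} := det M`, `M_{ab} = (v_b)_{i_a, a}`. -/
noncomputable def xi (v : Fin 8 → (Fin 8 → Fin 8 → ℝ)) (i : Fin 8 → Fin 8) : ℝ :=
  Matrix.det (Matrix.of fun a b => v b (i a) a)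

theorem stmt_17 (v : Fin 8 → (Fin 8 → Fin 8 → ℝ))
    (hv : ∀ a b, (∑ i : Fin 8, ∑ k : Fin 8, v a i k * v b i k) = if a = b then 1 else 0) :
    (∑ i : Fin 8, xi v (fun _ => i)) ^ 2 ≤ 1 := by
  classical
  set W : Fin 8 → Matrix (Fin 8) (Fin 8) ℝ := fun i => Matrix.of fun a b => v b i a with hW
  have hxi : ∀ i : Fin 8, xi v (fun _ => i) = (W i).det := by
    intro i
    unfold xi
    exact congrArg Matrix.det (by ext a b; simp [hW])
  set t : Fin 8 → ℝ := fun i => ((W i)ᵀ * W i).trace with ht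
  have htval : ∀ i, t i = ∑ b : Fin 8, ∑ a : Fin 8, v b i a * v b i a := by
    intro i
    simp only [ht, hW, Matrix.trace, Matrix.diag, Matrix.mul_apply,
      Matrix.transpose_apply, Matrix.of_apply]
  have htnn : ∀ i, 0 ≤ t i := by
    intro i
    rw [htval]
    exact Finset.sum_nonneg fun b _ => Finset.sum_nonneg fun a _ => mul_self_nonneg _
  have hts : ∑ i, t i = 8 := by
    calc ∑ i, t i = ∑ i : Fin 8, ∑ b : Fin 8, ∑ a : Fin 8, v b i a * v b i a :=
          Finset.sum_congr rfl fun i _ => htval i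
      _ = ∑ b : Fin 8, ∑ i : Fin 8, ∑ a : Fin 8, v b i a * v b i a := Finset.sum_comm
      _ = ∑ _b : Fin 8, (1:ℝ) := by
          refine Finset.sum_congr rfl fun b _ => ?_
          simpa using hv b b
      _ = 8 := by simp
  have hle : ∀ i, |(W i).det| ≤ t i / 8 := by
    intro i
    refine (det_prod_bound (W i)).trans ?_
    have h1 : t i ≤ 8 := by
      have := Finset.single_le_sum (f := t) (fun j _ => htnn j) (Finset.mem_univ i)
      rwa [hts] at this
    have h2 : 0 ≤ t i / 8 := div_nonneg (htnn i) (by norm_num)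
    have h3 : t i / 8 ≤ 1 := by linarith
    calc (t i / 8) ^ 4 ≤ (t i / 8) ^ 1 := pow_le_pow_of_le_one h2 h3 (by norm_num)
      _ = t i / 8 := pow_one _
  have habs : |∑ i, xi v (fun _ => i)| ≤ 1 := by
    calc |∑ i, xi v (fun _ => i)| ≤ ∑ i, |xi v (fun _ => i)| :=
          Finset.abs_sum_le_sum_abs _ _
      _ ≤ ∑ i, t i / 8 := by
          refine Finset.sum_le_sum fun i _ => ?_
          rw [hxi i]; exact hle i
      _ = 1 := by rw [← Finset.sum_div, hts]; norm_num
  calc (∑ i, xi v (fun _ => i)) ^ 2 = |∑ i, xi v (fun _ => i)| ^ 2 := (sq_abs _).symm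
    _ ≤ 1 ^ 2 := pow_le_pow_left₀ (abs_nonneg _) habs 2
    _ = 1 := one_pow _
end
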